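/- Let (Ω, 𝔉, P) be a probability space, Y a square-integrable real-valued random variable, and X_C, X_J random variables with values in measurable spaces (with a standard Borel condition as required for conditional independence). If E[(Y − E[Y | σ(X_C)])²] ≠ E[(Y − E[Y | σ(X_C, X_J)])²], then Y is not conditionally independent of X_J given X_C. -/

import Mathlib

open MeasureTheory ProbabilityTheory

section Aux

variable {Ω : Type*} [mΩ : MeasurableSpace Ω] [StandardBorelSpace Ω] [Nonempty Ω]
  (P : Measure Ω) [IsProbabilityMeasure P]
  {EC EJ : Type*} [MeasurableSpace EC] [MeasurableSpace EJ]
  {Y : Ω → ℝ} {XC : Ω → EC} {XJ : Ω → EJ}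

/-- Key rectangle identity: on sets of the form `XC ⁻¹' A ∩ XJ ⁻¹' B`, the integral of `Y`
agrees with the integral of `P[Y | σ(XC)]`, given conditional independence. -/
private lemma dedact_key_setIntegral
    (hY : Measurable Y) (hXC : Measurable XC) (hXJ : Measurable XJ)
    (hCI : CondIndepFun (MeasurableSpace.comap XC inferInstance) hXC.comap_le Y XJ P)
    (hYint : Integrable Y P)
    {A : Set EC} {B : Set EJ} (hA : MeasurableSet A) (hB : MeasurableSet B) :
    ∫ ω in XC ⁻¹' A ∩ XJ ⁻¹' B, Y ω ∂P
      = ∫ ω in XC ⁻¹' A ∩ XJ ⁻¹' B,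
          (P[Y | MeasurableSpace.comap XC inferInstance]) ω ∂P := by
  have hm₁ : MeasurableSpace.comap XC inferInstance ≤ mΩ := hXC.comap_le
  have hmY : MeasurableSpace.comap Y inferInstance ≤ mΩ := hY.comap_le
  have hfac := (condIndepFun_iff _ hXC.comap_le Y XJ hY hXJ P).mp hCI
  set A' : Set Ω := XC ⁻¹' A with hA'def
  set B' : Set Ω := XJ ⁻¹' B with hB'def
  have hA'm : MeasurableSet[mΩ] A' := hXC hA
  have hA'm₁ : MeasurableSet[MeasurableSpace.comap XC inferInstance] A' := ⟨A, hA, rfl⟩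
  have hB'm : MeasurableSet[mΩ] B' := hXJ hB
  have hB'mJ : MeasurableSet[MeasurableSpace.comap XJ inferInstance] B' := ⟨B, hB, rfl⟩
  set χ : Ω → ℝ := Set.indicator B' fun _ => (1 : ℝ) with hχdef
  have hχint : Integrable χ P := (integrable_const (1 : ℝ)).indicator hB'm
  have hYmeas : Measurable[MeasurableSpace.comap Y inferInstance] Y :=
    measurable_iff_comap_le.mpr le_rfl
  have hYsm : AEStronglyMeasurable[MeasurableSpace.comap Y inferInstance] Y P :=
    (hYmeas.stronglyMeasurable).aestronglyMeasurable
  refine MemLp.induction_stronglyMeasurable hmY ENNReal.one_ne_top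
    (fun f => ∫ ω in A' ∩ B', f ω ∂P
      = ∫ ω in A' ∩ B', (P[f | MeasurableSpace.comap XC inferInstance]) ω ∂P)
    ?_ ?_ ?_ ?_ (memLp_one_iff_integrable.mpr hYint) hYsm
  · -- indicator case
    intro c s hs _
    obtain ⟨t, ht, rfl⟩ := MeasurableSpace.measurableSet_comap.mp hs
    set s : Set Ω := Y ⁻¹' t with hsdef
    have hsm : MeasurableSet[mΩ] s := hY ht
    have hsmY : MeasurableSet[MeasurableSpace.comap Y inferInstance] s := ⟨t, ht, rfl⟩
    show ∫ ω in A' ∩ B', s.indicator (fun _ => c) ω ∂P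
      = ∫ ω in A' ∩ B',
          (P[s.indicator (fun _ => c) | MeasurableSpace.comap XC inferInstance]) ω ∂P
    have hLHS : ∫ ω in A' ∩ B', s.indicator (fun _ => c) ω ∂P
        = (P ((A' ∩ B') ∩ s)).toReal * c := by
      rw [setIntegral_indicator hsm, setIntegral_const, smul_eq_mul, measureReal_def]
    have hind_eq : s.indicator (fun _ => c) = c • s.indicator (fun _ => (1 : ℝ)) := by
      ext ω; by_cases hω : ω ∈ s <;> simp [Set.indicator_apply, hω]
    have hce : P[s.indicator (fun _ => c) | MeasurableSpace.comap XC inferInstance]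
        =ᵐ[P] c • (P⟦s | MeasurableSpace.comap XC inferInstance⟧) := by
      rw [hind_eq]; exact condExp_smul c _ _
    have hind_int : Integrable (s.indicator fun _ => (1 : ℝ)) P :=
      (integrable_const (1 : ℝ)).indicator hsm
    have h_nonneg : 0 ≤ᵐ[P] (P⟦s | MeasurableSpace.comap XC inferInstance⟧) :=
      condExp_nonneg (Filter.Eventually.of_forall fun ω =>
        Set.indicator_nonneg (fun _ _ => zero_le_one) ω)
    have h_le_one : (P⟦s | MeasurableSpace.comap XC inferInstance⟧)
        ≤ᵐ[P] fun _ => (1 : ℝ) := by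
      have h1 := condExp_mono (μ := P) (m := MeasurableSpace.comap XC inferInstance)
        hind_int (integrable_const (1 : ℝ))
        (Filter.Eventually.of_forall fun ω => by
          by_cases hω : ω ∈ s <;> simp [Set.indicator_apply, hω])
      calc (P⟦s | MeasurableSpace.comap XC inferInstance⟧)
          ≤ᵐ[P] P[(fun _ => (1:ℝ)) | MeasurableSpace.comap XC inferInstance] := h1
        _ = fun _ => (1 : ℝ) := condExp_const hm₁ 1
    have h_bound : ∀ᵐ ω ∂P,
        ‖(P⟦s | MeasurableSpace.comap XC inferInstance⟧) ω‖ ≤ 1 := by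
      filter_upwards [h_nonneg, h_le_one] with ω h0 h1
      rw [Real.norm_eq_abs, abs_le]
      exact ⟨by simpa using (by linarith [show (0:ℝ) ≤ _ from h0] : (-1:ℝ) ≤ _), h1⟩
    have hprod_int : Integrable
        (fun ω => (P⟦s | MeasurableSpace.comap XC inferInstance⟧) ω * χ ω) P :=
      hχint.bdd_mul integrable_condExp.aestronglyMeasurable h_bound
    have hpull : P[(P⟦s | MeasurableSpace.comap XC inferInstance⟧) * χ |
          MeasurableSpace.comap XC inferInstance]
        =ᵐ[P] (P⟦s | MeasurableSpace.comap XC inferInstance⟧)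
          * (P⟦B' | MeasurableSpace.comap XC inferInstance⟧) :=
      condExp_stronglyMeasurable_mul_of_bound hm₁ stronglyMeasurable_condExp hχint 1 h_bound
    have hfacsB : (P⟦s ∩ B' | MeasurableSpace.comap XC inferInstance⟧)
        =ᵐ[P] (P⟦s | MeasurableSpace.comap XC inferInstance⟧)
          * (P⟦B' | MeasurableSpace.comap XC inferInstance⟧) :=
      hfac s B' hsmY hB'mJ
    have hkey : ∫ ω in A' ∩ B', (P⟦s | MeasurableSpace.comap XC inferInstance⟧) ω ∂P
        = (P (A' ∩ (s ∩ B'))).toReal := by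
      have h1 : ∫ ω in A' ∩ B', (P⟦s | MeasurableSpace.comap XC inferInstance⟧) ω ∂P
          = ∫ ω in A', ((P⟦s | MeasurableSpace.comap XC inferInstance⟧) * χ) ω ∂P := by
        rw [← setIntegral_indicator hB'm]
        refine setIntegral_congr_fun hA'm (fun ω _ => ?_)
        by_cases hω : ω ∈ B' <;> simp [hχdef, Set.indicator_apply, hω]
      have h2 : ∫ ω in A', ((P⟦s | MeasurableSpace.comap XC inferInstance⟧) * χ) ω ∂P
          = ∫ ω in A', (P[(P⟦s | MeasurableSpace.comap XC inferInstance⟧) * χ |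
              MeasurableSpace.comap XC inferInstance]) ω ∂P :=
        (setIntegral_condExp hm₁ hprod_int hA'm₁).symm
      have h3 : ∫ ω in A', (P[(P⟦s | MeasurableSpace.comap XC inferInstance⟧) * χ |
              MeasurableSpace.comap XC inferInstance]) ω ∂P
          = ∫ ω in A', (P⟦s ∩ B' | MeasurableSpace.comap XC inferInstance⟧) ω ∂P :=
        setIntegral_congr_ae hA'm
          (by filter_upwards [hpull, hfacsB] with ω ha hb _ using ha.trans hb.symm)
      have h4 : ∫ ω in A', (P⟦s ∩ B' | MeasurableSpace.comap XC inferInstance⟧) ω ∂P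
          = ∫ ω in A', (s ∩ B').indicator (fun _ => (1 : ℝ)) ω ∂P :=
        setIntegral_condExp hm₁ ((integrable_const (1 : ℝ)).indicator (hsm.inter hB'm)) hA'm₁
      have h5 : ∫ ω in A', (s ∩ B').indicator (fun _ => (1 : ℝ)) ω ∂P
          = (P (A' ∩ (s ∩ B'))).toReal := by
        rw [setIntegral_indicator (hsm.inter hB'm), setIntegral_const, smul_eq_mul, mul_one, measureReal_def]
      rw [h1, h2, h3, h4, h5]
    have hRHS : ∫ ω in A' ∩ B',
          (P[s.indicator (fun _ => c) | MeasurableSpace.comap XC inferInstance]) ω ∂P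
        = c * (P (A' ∩ (s ∩ B'))).toReal := by
      rw [setIntegral_congr_ae (hA'm.inter hB'm)
        (by filter_upwards [hce] with ω h _ using h)]
      simp only [Pi.smul_apply, smul_eq_mul]
      rw [integral_const_mul, hkey]
    rw [hLHS, hRHS,
      show (A' ∩ B') ∩ s = A' ∩ (s ∩ B') by rw [Set.inter_assoc, Set.inter_comm B' s]]
    ring
  · -- additivity
    intro f g _ hf hg _ _ hQf hQg
    have hfint := memLp_one_iff_integrable.mp hf
    have hgint := memLp_one_iff_integrable.mp hg
    show ∫ ω in A' ∩ B', (f + g) ω ∂P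
      = ∫ ω in A' ∩ B', (P[f + g | MeasurableSpace.comap XC inferInstance]) ω ∂P
    have hcesum : ∫ ω in A' ∩ B', (P[f + g | MeasurableSpace.comap XC inferInstance]) ω ∂P
        = ∫ ω in A' ∩ B', ((P[f | MeasurableSpace.comap XC inferInstance]) ω
            + (P[g | MeasurableSpace.comap XC inferInstance]) ω) ∂P :=
      setIntegral_congr_ae (hA'm.inter hB'm)
        (by filter_upwards [(condExp_add hfint hgint
          (m := MeasurableSpace.comap XC inferInstance))] with ω h _ using h)
    rw [hcesum, integral_add integrable_condExp.integrableOn integrable_condExp.integrableOn,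
      ← hQf, ← hQg, ← integral_add hfint.integrableOn hgint.integrableOn]
    rfl
  · -- closedness
    have heq₁ : (fun f : lpMeas ℝ ℝ (MeasurableSpace.comap Y inferInstance) 1 P =>
          ∫ ω in A' ∩ B', (f : Ω → ℝ) ω ∂P)
        = (fun f : Lp ℝ 1 P => ∫ ω in A' ∩ B', f ω ∂P) ∘ Submodule.subtypeL _ := rfl
    have heq₂ : (fun f : lpMeas ℝ ℝ (MeasurableSpace.comap Y inferInstance) 1 P =>
          ∫ ω in A' ∩ B', (P[(f : Ω → ℝ) | MeasurableSpace.comap XC inferInstance]) ω ∂P)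
        = (fun f : Lp ℝ 1 P => ∫ ω in A' ∩ B', f ω ∂P)
          ∘ (condExpL1CLM ℝ hm₁ P) ∘ Submodule.subtypeL _ := by
      refine funext fun f => ?_
      have h1 : P[(f : Ω → ℝ) | MeasurableSpace.comap XC inferInstance]
          =ᵐ[P] condExpL1 hm₁ P (f : Ω → ℝ) := condExp_ae_eq_condExpL1 hm₁ _
      have h2 : condExpL1 hm₁ P (f : Ω → ℝ)
          = condExpL1CLM ℝ hm₁ P
            (((Lp.memLp ((f : Lp ℝ 1 P))).integrable le_rfl).toL1 (f : Ω → ℝ)) :=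
        condExpL1_eq _
      have h3 : (((Lp.memLp ((f : Lp ℝ 1 P))).integrable le_rfl).toL1 (f : Ω → ℝ))
          = (f : Lp ℝ 1 P) := Integrable.toL1_coeFn _ _
      refine integral_congr_ae (ae_restrict_of_ae ?_)
      refine h1.trans ?_
      rw [h2, h3]
      exact Filter.EventuallyEq.rfl
    refine isClosed_eq ?_ ?_
    · rw [heq₁]
      exact (continuous_setIntegral _).comp (ContinuousLinearMap.continuous _)
    · rw [heq₂]
      exact (continuous_setIntegral _).comp
        ((ContinuousLinearMap.continuous _).comp (ContinuousLinearMap.continuous _))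
  · -- a.e. congruence
    intro f g hfg _ hQf
    have e1 : ∫ ω in A' ∩ B', g ω ∂P = ∫ ω in A' ∩ B', f ω ∂P :=
      integral_congr_ae (ae_restrict_of_ae hfg.symm)
    have e2 : ∫ ω in A' ∩ B', (P[f | MeasurableSpace.comap XC inferInstance]) ω ∂P
        = ∫ ω in A' ∩ B', (P[g | MeasurableSpace.comap XC inferInstance]) ω ∂P :=
      setIntegral_congr_ae (hA'm.inter hB'm)
        (by filter_upwards [(condExp_congr_ae
          (m := MeasurableSpace.comap XC inferInstance) hfg)] with ω h _ using h)
    rw [e1, hQf, e2]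

private lemma dedact_condExp_eq
    (hY : Measurable Y) (hXC : Measurable XC) (hXJ : Measurable XJ)
    (hCI : CondIndepFun (MeasurableSpace.comap XC inferInstance) hXC.comap_le Y XJ P)
    (hYint : Integrable Y P) :
    P[Y | MeasurableSpace.comap XC inferInstance]
      =ᵐ[P] P[Y | MeasurableSpace.comap (fun ω' => (XC ω', XJ ω')) inferInstance] := by
  have hm₁ : MeasurableSpace.comap XC inferInstance ≤ mΩ := hXC.comap_le
  have hpair : Measurable fun ω' => (XC ω', XJ ω') := hXC.prodMk hXJ
  have hm₂ : MeasurableSpace.comap (fun ω' => (XC ω', XJ ω')) inferInstance ≤ mΩ :=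
    hpair.comap_le
  have hle : MeasurableSpace.comap XC inferInstance
      ≤ MeasurableSpace.comap (fun ω' => (XC ω', XJ ω')) inferInstance := by
    rintro s ⟨u, hu, rfl⟩
    exact ⟨Prod.fst ⁻¹' u, measurable_fst hu, rfl⟩
  have hall : ∀ s, MeasurableSet[MeasurableSpace.comap
        (fun ω' => (XC ω', XJ ω')) inferInstance] s → P s < ⊤ →
      ∫ ω in s, (P[Y | MeasurableSpace.comap XC inferInstance]) ω ∂P
        = ∫ ω in s, Y ω ∂P := by
    rintro s ⟨u, hu, rfl⟩ -
    revert hu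
    refine fun hu => MeasurableSpace.induction_on_inter (m := Prod.instMeasurableSpace)
      (C := fun u _ =>
        ∫ ω in (fun ω' => (XC ω', XJ ω')) ⁻¹' u,
            (P[Y | MeasurableSpace.comap XC inferInstance]) ω ∂P
          = ∫ ω in (fun ω' => (XC ω', XJ ω')) ⁻¹' u, Y ω ∂P)
      generateFrom_prod.symm isPiSystem_prod (by simp) ?basic ?compl ?iUnion _ hu
    case basic =>
      intro t ht
      obtain ⟨A, hA, B, hB, rfl⟩ := ht
      rw [Set.mk_preimage_prod]
      exact (dedact_key_setIntegral P hY hXC hXJ hCI hYint hA hB).symm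
    case compl =>
      intro t htm ht
      have hpre : (fun ω' => (XC ω', XJ ω')) ⁻¹' tᶜ
          = ((fun ω' => (XC ω', XJ ω')) ⁻¹' t)ᶜ := rfl
      have htotal : ∫ ω, (P[Y | MeasurableSpace.comap XC inferInstance]) ω ∂P
          = ∫ ω, Y ω ∂P := integral_condExp hm₁ (f := Y)
      have hmt : MeasurableSet ((fun ω' => (XC ω', XJ ω')) ⁻¹' t) := hpair htm
      have h1 := integral_add_compl hmt
        (integrable_condExp (f := Y) (m := MeasurableSpace.comap XC inferInstance) (μ := P))
      have h2 := integral_add_compl hmt hYint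
      rw [hpre]
      linarith
    case iUnion =>
      intro f hdisj hfm hf
      have hmf : ∀ i, MeasurableSet ((fun ω' => (XC ω', XJ ω')) ⁻¹' f i) :=
        fun i => hpair (hfm i)
      have hdisj' : Pairwise (Function.onFun Disjoint fun i => (fun ω' => (XC ω', XJ ω')) ⁻¹' f i) :=
        fun i j hij => Disjoint.preimage _ (hdisj hij)
      have hpreU : (fun ω' => (XC ω', XJ ω')) ⁻¹' (⋃ i, f i)
          = ⋃ i, (fun ω' => (XC ω', XJ ω')) ⁻¹' f i := Set.preimage_iUnion
      rw [hpreU]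
      have hs1 := hasSum_integral_iUnion hmf hdisj'
        (integrable_condExp (f := Y)
          (m := MeasurableSpace.comap XC inferInstance) (μ := P)).integrableOn
      have hs2 := hasSum_integral_iUnion hmf hdisj' hYint.integrableOn
      refine hs1.unique ?_
      have heq : (fun n => ∫ ω in (fun ω' => (XC ω', XJ ω')) ⁻¹' f n,
            (P[Y | MeasurableSpace.comap XC inferInstance]) ω ∂P)
          = fun n => ∫ ω in (fun ω' => (XC ω', XJ ω')) ⁻¹' f n, Y ω ∂P :=
        funext fun n => hf n
      rw [heq]
      exact hs2
  exact ae_eq_condExp_of_forall_setIntegral_eq hm₂ hYint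
    (fun s _ _ => integrable_condExp.integrableOn) (fun s hs hμs => hall s hs hμs)
    ((stronglyMeasurable_condExp.mono hle).aestronglyMeasurable)

end Aux

/-- Associative Sensitivity of AI for the loss-optimal predictor under mean squared error:
if `E[(Y − E[Y|σ(X_C)])²] ≠ E[(Y − E[Y|σ(X_C, X_J)])²]`, then `Y` is not conditionally
independent of `X_J` given `X_C`. -/
theorem dedact_mse_associative_sensitivity
    {Ω : Type*} [MeasurableSpace Ω] [StandardBorelSpace Ω] [Nonempty Ω]
    (P : Measure Ω) [IsProbabilityMeasure P]
    {EC EJ : Type*} [MeasurableSpace EC] [MeasurableSpace EJ]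
    (Y : Ω → ℝ) (XC : Ω → EC) (XJ : Ω → EJ)
    (hY : Measurable Y) (hY2 : MemLp Y 2 P)
    (hXC : Measurable XC) (hXJ : Measurable XJ)
    (hne : (∫ ω, (Y ω - (P[Y | MeasurableSpace.comap XC inferInstance]) ω) ^ 2 ∂P)
      ≠ ∫ ω, (Y ω -
          (P[Y | MeasurableSpace.comap (fun ω' => (XC ω', XJ ω')) inferInstance]) ω) ^ 2 ∂P) :
    ¬ CondIndepFun (MeasurableSpace.comap XC inferInstance) hXC.comap_le Y XJ P := by
  intro hCI
  apply hne
  have hcond := dedact_condExp_eq P hY hXC hXJ hCI (hY2.integrable one_le_two)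
  refine integral_congr_ae ?_
  filter_upwards [hcond] with ω hω
  rw [hω]
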